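/- Let q = p^u be an odd prime power and (γ, δ, N) a gamma triple with N | q−1. For integers m define s_δ(m) as the multiplicity of e^{2πi m/(q−1)} as a root of the gcd polynomial D_δ(T) of the numerator ∏_{γ_i<0}(T^{−γ_i} − ζ_N^{δ_i}) and denominator ∏_{γ_i>0}(T^{γ_i} − ζ_N^{−δ_i}). Then for every k coprime to q−1 and every integer m, s_δ(m) = s_{kδ}(km). -/

import Mathlib

open Polynomial

/-- `ζ_N = e^{2πi/N}`. -/
noncomputable def zetaN (N : ℕ) : ℂ := Complex.exp (2 * Real.pi * Complex.I / N)

/-- The gcd polynomial `D_δ(T)` of `∏_{γ_i<0}(T^{-γ_i} - ζ_N^{δ_i})` and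
`∏_{γ_i>0}(T^{γ_i} - ζ_N^{-δ_i})`. -/
noncomputable def Dpoly (d : ℕ) (γ δ : Fin (d + 2) → ℤ) (N : ℕ) : Polynomial ℂ :=
  EuclideanDomain.gcd
    (∏ i ∈ Finset.univ.filter (fun i => γ i < 0),
      (X ^ (-(γ i)).toNat - C (zetaN N ^ (δ i))))
    (∏ i ∈ Finset.univ.filter (fun i => 0 < γ i),
      (X ^ (γ i).toNat - C (zetaN N ^ (-(δ i)))))

/-- `s_δ(m)`: the multiplicity of `e^{2πim/(q-1)}` as a root of `D_δ(T)`. -/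
noncomputable def sMult (q d : ℕ) (γ δ : Fin (d + 2) → ℤ) (N : ℕ) (m : ℤ) : ℕ :=
  (Dpoly d γ δ N).rootMultiplicity
    (Complex.exp (2 * Real.pi * Complex.I * m / ((q : ℂ) - 1)))

lemma rootMultiplicity_gcd (p q : Polynomial ℂ) (hp : p ≠ 0) (hq : q ≠ 0) (a : ℂ) :
    (EuclideanDomain.gcd p q).rootMultiplicity a =
      min (p.rootMultiplicity a) (q.rootMultiplicity a) := by
  have hg : EuclideanDomain.gcd p q ≠ 0 := by
    intro h
    exact hp (EuclideanDomain.gcd_eq_zero_iff.mp h).1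
  apply le_antisymm
  · refine le_min ?_ ?_
    · exact (le_rootMultiplicity_iff hp).mpr
        ((pow_rootMultiplicity_dvd _ a).trans (EuclideanDomain.gcd_dvd_left p q))
    · exact (le_rootMultiplicity_iff hq).mpr
        ((pow_rootMultiplicity_dvd _ a).trans (EuclideanDomain.gcd_dvd_right p q))
  · refine (le_rootMultiplicity_iff hg).mpr (EuclideanDomain.dvd_gcd ?_ ?_)
    · exact dvd_trans (pow_dvd_pow _ (min_le_left _ _)) (pow_rootMultiplicity_dvd _ a)
    · exact dvd_trans (pow_dvd_pow _ (min_le_right _ _)) (pow_rootMultiplicity_dvd _ a)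

lemma rootMultiplicity_X_pow_sub_C {a : ℕ} (ha : a ≠ 0) {c : ℂ} (hc : c ≠ 0) (x : ℂ) :
    (X ^ a - C c).rootMultiplicity x = if x ^ a = c then 1 else 0 := by
  have hne : (X ^ a - C c : Polynomial ℂ) ≠ 0 := (monic_X_pow_sub_C c ha).ne_zero
  by_cases h : x ^ a = c
  · rw [if_pos h]
    have hsep : (X ^ a - C c : Polynomial ℂ).Separable :=
      separable_X_pow_sub_C c (by exact_mod_cast (Nat.cast_ne_zero (R := ℂ)).mpr ha) hc
    refine le_antisymm (rootMultiplicity_le_one_of_separable hsep x) ?_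
    rw [Nat.one_le_iff_ne_zero, ← pos_iff_ne_zero, rootMultiplicity_pos hne]
    simp [IsRoot, h]
  · rw [if_neg h, rootMultiplicity_eq_zero]
    simp [IsRoot, sub_eq_zero, h]

lemma rootMultiplicity_prod {ι : Type*} (s : Finset ι) (f : ι → Polynomial ℂ)
    (hf : ∀ i ∈ s, f i ≠ 0) (x : ℂ) :
    (∏ i ∈ s, f i).rootMultiplicity x = ∑ i ∈ s, (f i).rootMultiplicity x := by
  classical
  induction s using Finset.induction_on with
  | empty => simp
  | insert _ _ hnotmem ih =>
    rename_i i s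
    rw [Finset.prod_insert hnotmem, Finset.sum_insert hnotmem,
      rootMultiplicity_mul (mul_ne_zero (hf i (Finset.mem_insert_self i s))
        (Finset.prod_ne_zero_iff.mpr fun j hj => hf j (Finset.mem_insert_of_mem hj))),
      ih fun j hj => hf j (Finset.mem_insert_of_mem hj)]

lemma zpow_inj_of_coprime {u v : ℂ} {n : ℕ} (hn : n ≠ 0) (hu : u ^ n = 1) (hv : v ^ n = 1)
    {k : ℤ} (hk : IsCoprime k (n : ℤ)) : u ^ k = v ^ k ↔ u = v := by
  have hu0 : u ≠ 0 := fun h => by simp [h, zero_pow hn] at hu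
  have hv0 : v ≠ 0 := fun h => by simp [h, zero_pow hn] at hv
  constructor
  · intro h
    obtain ⟨a, b, hab⟩ := hk
    set w := u * v⁻¹ with hw
    have hw0 : w ≠ 0 := mul_ne_zero hu0 (inv_ne_zero hv0)
    have hwk : w ^ k = 1 := by
      rw [hw, mul_zpow, inv_zpow, h]
      exact mul_inv_cancel₀ (zpow_ne_zero k hv0)
    have hwn : w ^ (n : ℤ) = 1 := by
      rw [hw, mul_zpow, zpow_natCast, zpow_natCast, hu, inv_pow, hv]
      simp
    have : w = 1 := by
      calc w = w ^ (1 : ℤ) := (zpow_one w).symm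
        _ = w ^ (a * k + b * n) := by rw [hab]
        _ = (w ^ k) ^ a * (w ^ (n : ℤ)) ^ b := by
            rw [zpow_add₀ hw0, mul_comm a k, mul_comm b (n : ℤ), zpow_mul, zpow_mul]
        _ = 1 := by rw [hwk, hwn]; simp
    field_simp [hw] at this
    rw [hw] at this; exact (mul_inv_eq_one₀ hv0).mp this
  · intro h; rw [h]

/-- For a gamma triple `(γ, δ, N)` with `N ∣ q-1` and `k` coprime to `q-1`:
`s_δ(m) = s_{kδ}(km)`. -/
theorem sMult_eq_sMult_smul (q : ℕ) (hq : IsPrimePow q) (hodd : Odd q)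
    (d : ℕ) (γ δ : Fin (d + 2) → ℤ)
    (hsum : ∑ i, γ i = 0) (hgcd : Finset.univ.gcd γ = 1)
    (N : ℕ) (hN : 0 < N) (hNdvd : N ∣ q - 1)
    (k : ℤ) (hk : IsCoprime k ((q : ℤ) - 1)) (m : ℤ) :
    sMult q d γ δ N m = sMult q d γ (fun i => k * δ i) N (k * m) := by
  classical
  have hq2 : 2 ≤ q := hq.two_le
  have hn0 : q - 1 ≠ 0 := by omega
  have hcast : ((q : ℂ) - 1) = ((q - 1 : ℕ) : ℂ) := by
    have : (q : ℂ) = (((q - 1) + 1 : ℕ) : ℂ) := by norm_cast; omega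
    rw [this]; push_cast; ring
  have hnC : ((q - 1 : ℕ) : ℂ) ≠ 0 := Nat.cast_ne_zero.mpr hn0
  have hkn : IsCoprime k (((q - 1 : ℕ) : ℤ)) := by
    have : ((q : ℤ) - 1) = ((q - 1 : ℕ) : ℤ) := by omega
    exact this ▸ hk
  have hζ0 : zetaN N ≠ 0 := Complex.exp_ne_zero _
  have hζn : zetaN N ^ (q - 1) = 1 := by
    have hζN : zetaN N ^ N = 1 := by
      rw [zetaN, ← Complex.exp_nat_mul]
      have hNC : (N : ℂ) ≠ 0 := Nat.cast_ne_zero.mpr hN.ne'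
      rw [mul_comm, div_mul_cancel₀ _ hNC]
      exact Complex.exp_two_pi_mul_I
    obtain ⟨t, ht⟩ := hNdvd
    rw [ht, pow_mul, hζN, one_pow]
  -- the two evaluation points
  set x : ℂ := Complex.exp (2 * Real.pi * Complex.I * (m : ℂ) / ((q : ℂ) - 1)) with hx_def
  set x' : ℂ := Complex.exp (2 * Real.pi * Complex.I * ((k * m : ℤ) : ℂ) / ((q : ℂ) - 1))
    with hx'_def
  have hxn : x ^ (q - 1) = 1 := by
    rw [hx_def, ← Complex.exp_nat_mul]
    have : ((q - 1 : ℕ) : ℂ) * (2 * Real.pi * Complex.I * m / ((q : ℂ) - 1))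
        = m * (2 * Real.pi * Complex.I) := by
      rw [hcast, mul_comm, div_mul_cancel₀ _ hnC]; ring
    rw [this]
    exact Complex.exp_int_mul_two_pi_mul_I m
  -- the key equivalence for each factor
  have key : ∀ (a : ℕ), a ≠ 0 → ∀ (e : ℤ),
      (x ^ a = zetaN N ^ e ↔ x' ^ a = zetaN N ^ (k * e)) := by
    intro a ha e
    have hxa : x' ^ a = (x ^ a) ^ k := by
      rw [hx_def, hx'_def, ← Complex.exp_nat_mul, ← Complex.exp_nat_mul,
        ← Complex.exp_int_mul]
      congr 1
      push_cast
      ring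
    have hze : zetaN N ^ (k * e) = (zetaN N ^ e) ^ k := by
      rw [mul_comm, zpow_mul]
    have hun : (x ^ a) ^ (q - 1) = 1 := by
      rw [← pow_mul, mul_comm, pow_mul, hxn, one_pow]
    have hvn : (zetaN N ^ e) ^ (q - 1) = 1 := by
      rw [← zpow_natCast, ← zpow_mul, mul_comm, zpow_mul, zpow_natCast, hζn, one_zpow]
    rw [hxa, hze]
    exact (zpow_inj_of_coprime hn0 hun hvn hkn).symm
  -- nonvanishing of the four products
  have hmon : ∀ (a : ℕ), a ≠ 0 → ∀ (c : ℂ), (X ^ a - C c : Polynomial ℂ) ≠ 0 :=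
    fun a ha c => (monic_X_pow_sub_C c ha).ne_zero
  have hneg : ∀ i ∈ Finset.univ.filter (fun i => γ i < 0), (-(γ i)).toNat ≠ 0 := by
    intro i hi
    simp only [Finset.mem_filter] at hi
    omega
  have hpos : ∀ i ∈ Finset.univ.filter (fun i => 0 < γ i), (γ i).toNat ≠ 0 := by
    intro i hi
    simp only [Finset.mem_filter] at hi
    omega
  unfold sMult Dpoly
  rw [rootMultiplicity_gcd _ _
      (Finset.prod_ne_zero_iff.mpr fun i hi => hmon _ (hneg i hi) _)
      (Finset.prod_ne_zero_iff.mpr fun i hi => hmon _ (hpos i hi) _),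
    rootMultiplicity_gcd _ _
      (Finset.prod_ne_zero_iff.mpr fun i hi => hmon _ (hneg i hi) _)
      (Finset.prod_ne_zero_iff.mpr fun i hi => hmon _ (hpos i hi) _),
    rootMultiplicity_prod _ _ (fun i hi => hmon _ (hneg i hi) _),
    rootMultiplicity_prod _ _ (fun i hi => hmon _ (hpos i hi) _),
    rootMultiplicity_prod _ _ (fun i hi => hmon _ (hneg i hi) _),
    rootMultiplicity_prod _ _ (fun i hi => hmon _ (hpos i hi) _)]
  congr 1
  · refine Finset.sum_congr rfl fun i hi => ?_
    beta_reduce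
    rw [rootMultiplicity_X_pow_sub_C (hneg i hi) (zpow_ne_zero _ hζ0),
      rootMultiplicity_X_pow_sub_C (hneg i hi) (zpow_ne_zero _ hζ0)]
    exact if_congr (key _ (hneg i hi) (δ i)) rfl rfl
  · refine Finset.sum_congr rfl fun i hi => ?_
    beta_reduce
    rw [rootMultiplicity_X_pow_sub_C (hpos i hi) (zpow_ne_zero _ hζ0),
      rootMultiplicity_X_pow_sub_C (hpos i hi) (zpow_ne_zero _ hζ0),
      show -(k * δ i) = k * (-(δ i)) by ring]
    exact if_congr (key _ (hpos i hi) (-(δ i))) rfl rfl
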